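/- The oracle feasible set is contained in the round-trip feasible set: A_o(s,g,𝕃) ⊆ A_rt(s,g,𝕃). -/
import Mathlib

/-- The oracle feasible set is contained in the round-trip feasible set. -/
theorem oracle_subset_rt_feasible {S A : Type*} (𝕃 : Finset S)
    (h : S → S → ℝ) (q : S → S → A → ℝ)
    (h_nonneg : ∀ x y, 0 ≤ h x y)
    (h_refl : ∀ x, h x x = 0)
    (h_tri : ∀ x y z, h x z ≤ h x y + h y z)
    (s g : S) (η : ℝ) (hη : 0 < η)
    (hW : ∃ ℓ ∈ 𝕃, h g ℓ + h ℓ g ≤ η) :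
    {a : A | ∀ ℓ ∈ 𝕃, q ℓ s a ≤ h g ℓ + h s g} ⊆
      {a : A | ∀ ℓ ∈ 𝕃, h g ℓ + h ℓ g ≤ η → q ℓ s a ≤ h s ℓ + η} := by
  intro a ha ℓ hℓ hw
  have := ha ℓ hℓ
  have := h_tri s ℓ g
  linarith
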